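/- Let R be a nontrivial commutative ring, let Λ = Λ_N(R) be the exterior algebra of the free module R^N over R, and let m, n ≥ 1. Let g be the (m+n)×(m+n) matrix over Λ written in block form g = (p q; r s), where p is m×m and s is n×n with all entries in the even part of Λ, and q is m×n and r is n×m with all entries in the odd part of Λ. Then g is invertible in the matrix ring M_{m+n}(Λ) if and only if p is invertible in M_m(Λ) and s is invertible in Mₙ(Λ). -/

import Mathlib

/-- The even part of the exterior algebra: the sum of the homogeneous components of even
exterior degree. -/
noncomputable def evenPart (R : Type*) [CommRing R] (M : Type*) [AddCommGroup M]
    [Module R M] : Submodule R (ExteriorAlgebra R M) :=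
  ⨆ i : ℕ, LinearMap.range (ExteriorAlgebra.ι R (M := M)) ^ (2 * i)

/-- The odd part of the exterior algebra: the sum of the homogeneous components of odd
exterior degree. -/
noncomputable def oddPart (R : Type*) [CommRing R] (M : Type*) [AddCommGroup M]
    [Module R M] : Submodule R (ExteriorAlgebra R M) :=
  ⨆ i : ℕ, LinearMap.range (ExteriorAlgebra.ι R (M := M)) ^ (2 * i + 1)

open ExteriorAlgebra

section Aux

set_option linter.unusedSectionVars false

variable (R : Type*) [CommRing R] (NN : ℕ)

local notation "Λ" => ExteriorAlgebra R (Fin NN → R)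
local notation "P" => LinearMap.range (ExteriorAlgebra.ι R (M := Fin NN → R))

lemma aux_iotaMulti_zero (v : Fin (NN + 1) → (Fin NN → R)) :
    ExteriorAlgebra.ιMulti R (NN + 1) v = 0 := by
  have h : ((ιMulti R (NN + 1) (M := Fin NN → R)).toMultilinearMap) =
      (0 : MultilinearMap R (fun _ : Fin (NN + 1) => Fin NN → R) Λ) := by
    apply Module.Basis.ext_multilinear (fun _ => Pi.basisFun R (Fin NN))
    intro f
    have hninj : ¬ Function.Injective f := by
      intro hinj
      have := Fintype.card_le_of_injective f hinj
      simp at this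
    simp only [MultilinearMap.zero_apply, AlternatingMap.coe_multilinearMap]
    exact (ιMulti R (NN + 1)).map_eq_zero_of_not_injective _
      (fun hinj => hninj (fun a b hab => hinj (congrArg _ hab)))
  calc ιMulti R (NN + 1) v
      = (ιMulti R (NN + 1) (M := Fin NN → R)).toMultilinearMap v := rfl
    _ = 0 := by rw [h]; rfl

lemma aux_pow_bot : P ^ (NN + 1) = (⊥ : Submodule R Λ) := by
  have h := ιMulti_span_fixedDegree R (NN + 1) (M := Fin NN → R)
  have h2 : Set.range (ιMulti R (NN + 1) (M := Fin NN → R)) ⊆ {0} := by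
    rintro x ⟨v, rfl⟩
    exact aux_iotaMulti_zero R NN v
  refine le_bot_iff.mp ?_
  calc P ^ (NN + 1) = Submodule.span R (Set.range (ιMulti R (NN + 1) (M := Fin NN → R))) :=
        h.symm
    _ ≤ Submodule.span R {0} := Submodule.span_mono h2
    _ = ⊥ := by simp

/-- The augmentation ideal: positive-degree part. -/
noncomputable def auxK : Submodule R Λ := ⨆ i : ℕ, P ^ (i + 1)

lemma aux_mem_iSup_pow (x : Λ) : x ∈ (⨆ i : ℕ, P ^ i) := by
  have hmul : (⨆ i : ℕ, P ^ i) * (⨆ i : ℕ, P ^ i) ≤ ⨆ i : ℕ, P ^ i := by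
    rw [Submodule.iSup_mul]
    refine iSup_le fun i => ?_
    rw [Submodule.mul_iSup]
    refine iSup_le fun j => ?_
    rw [← pow_add]
    exact le_iSup (fun k => P ^ k) (i + j)
  induction x using ExteriorAlgebra.induction with
  | algebraMap r =>
      exact le_iSup (fun k => P ^ k) 0 (by simpa using Submodule.algebraMap_mem (A := Λ) r)
  | ι m =>
      exact le_iSup (fun k => P ^ k) 1 (by simpa using LinearMap.mem_range_self _ m)
  | mul a b ha hb => exact hmul (Submodule.mul_mem_mul ha hb)
  | add a b ha hb => exact add_mem ha hb

lemma aux_iSup_pow_top : (⨆ i : ℕ, P ^ i) = (⊤ : Submodule R Λ) :=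
  eq_top_iff.mpr fun x _ => aux_mem_iSup_pow R NN x

lemma aux_mul_memK (a : Λ) {x : Λ} (hx : x ∈ auxK R NN) : a * x ∈ auxK R NN := by
  have h : (⊤ : Submodule R Λ) * auxK R NN ≤ auxK R NN := by
    rw [← aux_iSup_pow_top R NN, Submodule.iSup_mul]
    refine iSup_le fun i => ?_
    rw [auxK, Submodule.mul_iSup]
    refine iSup_le fun j => ?_
    rw [← pow_add]
    have : i + (j + 1) = (i + j) + 1 := by omega
    rw [this]
    exact le_iSup (fun k => P ^ (k + 1)) (i + j)
  exact h (Submodule.mul_mem_mul Submodule.mem_top hx)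

lemma auxK_pow_le (mm : ℕ) : auxK R NN ^ (mm + 1) ≤ ⨆ i : ℕ, P ^ (i + (mm + 1)) := by
  induction mm with
  | zero => rw [pow_one]; exact le_rfl
  | succ k ih =>
      rw [pow_succ]
      calc auxK R NN ^ (k + 1) * auxK R NN
          ≤ (⨆ i : ℕ, P ^ (i + (k + 1))) * auxK R NN :=
            mul_le_mul' ih le_rfl
        _ ≤ ⨆ i : ℕ, P ^ (i + (k + 2)) := by
            rw [Submodule.iSup_mul]
            refine iSup_le fun i => ?_
            rw [auxK, Submodule.mul_iSup]
            refine iSup_le fun j => ?_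
            rw [← pow_add]
            have : i + (k + 1) + (j + 1) = (i + j) + (k + 2) := by omega
            rw [this]
            exact le_iSup (fun l => P ^ (l + (k + 2))) (i + j)

lemma auxK_pow_bot : auxK R NN ^ (NN + 1) = (⊥ : Submodule R Λ) := by
  refine le_bot_iff.mp ?_
  refine (auxK_pow_le R NN NN).trans ?_
  refine iSup_le fun i => ?_
  rw [pow_add, aux_pow_bot, Submodule.mul_bot]

lemma auxK_eps {x : Λ} (hx : x ∈ auxK R NN) : algebraMapInv x = 0 := by
  have hP : Submodule.map (algebraMapInv (M := Fin NN → R)).toLinearMap P = ⊥ := by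
    refine le_bot_iff.mp ?_
    rintro y ⟨z, ⟨v, rfl⟩, rfl⟩
    simp [algebraMapInv]
  have h : auxK R NN ≤ LinearMap.ker (algebraMapInv (M := Fin NN → R)).toLinearMap := by
    refine iSup_le fun i => ?_
    intro z hz
    have : algebraMapInv.toLinearMap z ∈
        Submodule.map (algebraMapInv (M := Fin NN → R)).toLinearMap (P ^ (i + 1)) :=
      Submodule.mem_map_of_mem hz
    rw [Submodule.map_pow, hP, pow_succ, Submodule.mul_bot] at this
    simpa using this
  simpa using h hx

lemma aux_decompose (x : Λ) :
    x - algebraMap R Λ (algebraMapInv x) ∈ auxK R NN := by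
  have htop : (⊤ : Submodule R Λ) ≤ (P ^ 0) ⊔ auxK R NN := by
    rw [← aux_iSup_pow_top R NN]
    refine iSup_le fun i => ?_
    cases i with
    | zero => exact le_sup_left
    | succ j => exact le_sup_of_le_right (le_iSup (fun k => P ^ (k + 1)) j)
  obtain ⟨a, ha, k, hk, rfl⟩ := Submodule.mem_sup.mp (htop (Submodule.mem_top : x ∈ ⊤))
  rw [pow_zero] at ha
  obtain ⟨r, rfl⟩ := Submodule.mem_one.mp ha
  have : algebraMapInv (algebraMap R Λ r + k) = r := by
    rw [map_add, auxK_eps R NN hk, add_zero, AlgHom.commutes]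
    simp
  rw [this]
  simpa using hk

lemma aux_matK_pow {l : Type*} [Fintype l] [DecidableEq l] (D : Matrix l l Λ)
    (hD : ∀ i j, D i j ∈ auxK R NN) :
    ∀ mm : ℕ, ∀ i j, (D ^ (mm + 1)) i j ∈ auxK R NN ^ (mm + 1) := by
  intro mm
  induction mm with
  | zero => intro i j; simpa [pow_one] using hD i j
  | succ k ih =>
      intro i j
      rw [pow_succ D, Matrix.mul_apply, pow_succ (auxK R NN)]
      exact Submodule.sum_mem _ fun a _ => Submodule.mul_mem_mul (ih i a) (hD a j)

lemma aux_matrix_isUnit_iff {l : Type*} [Fintype l] [DecidableEq l] (M : Matrix l l Λ) :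
    IsUnit M ↔ IsUnit (M.map (algebraMapInv (M := Fin NN → R))) := by
  constructor
  · intro h
    have := h.map (RingHom.mapMatrix (algebraMapInv (M := Fin NN → R)).toRingHom)
    simpa [RingHom.mapMatrix_apply] using this
  · intro h
    set C : Matrix l l Λ := (M.map algebraMapInv).map (algebraMap R Λ) with hCdef
    have hC : IsUnit C := by
      have := h.map (RingHom.mapMatrix (algebraMap R Λ))
      simpa [RingHom.mapMatrix_apply, hCdef] using this
    obtain ⟨u, hu⟩ := hC
    set D : Matrix l l Λ := M - C with hDdef
    have hD : ∀ i j, D i j ∈ auxK R NN := fun i j => by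
      simpa [hDdef, hCdef, Matrix.sub_apply, Matrix.map_apply] using aux_decompose R NN (M i j)
    set V : Matrix l l Λ := (u⁻¹).val * D with hVdef
    have hV : ∀ i j, V i j ∈ auxK R NN := fun i j => by
      rw [hVdef, Matrix.mul_apply]
      exact Submodule.sum_mem _ fun a _ => aux_mul_memK R NN _ (hD a j)
    have hnil : V ^ (NN + 1) = 0 := by
      ext i j
      have h2 := aux_matK_pow R NN V hV NN i j
      rw [auxK_pow_bot] at h2
      simpa using h2
    have h1 : IsUnit (1 + V) := by
      rw [add_comm]
      exact IsNilpotent.isUnit_add_one ⟨NN + 1, hnil⟩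
    have hM : M = u.val * (1 + V) := by
      rw [mul_add, mul_one, hVdef, Units.mul_inv_cancel_left, hu, hDdef]
      abel
    rw [hM]
    exact u.isUnit.mul h1

lemma aux_blocks_isUnit_iff {m n : ℕ} (A : Matrix (Fin m) (Fin m) R)
    (D : Matrix (Fin n) (Fin n) R) :
    IsUnit (Matrix.fromBlocks A 0 0 D) ↔ IsUnit A ∧ IsUnit D := by
  rw [Matrix.isUnit_iff_isUnit_det, Matrix.det_fromBlocks_zero₂₁, IsUnit.mul_iff,
    ← Matrix.isUnit_iff_isUnit_det, ← Matrix.isUnit_iff_isUnit_det]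

end Aux

/-- Invertibility criterion for supermatrices (Example 3.3 of the paper): a block matrix
`(p q; r s)` over the Grassmann algebra `Λ_N(R)`, with even diagonal blocks and odd
off-diagonal blocks, is invertible iff both diagonal blocks `p` and `s` are invertible. -/
theorem supermatrix_isUnit_iff (R : Type*) [CommRing R] [Nontrivial R] (NN m n : ℕ)
    (hm : 1 ≤ m) (hn : 1 ≤ n)
    (p : Matrix (Fin m) (Fin m) (ExteriorAlgebra R (Fin NN → R)))
    (q : Matrix (Fin m) (Fin n) (ExteriorAlgebra R (Fin NN → R)))
    (r : Matrix (Fin n) (Fin m) (ExteriorAlgebra R (Fin NN → R)))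
    (s : Matrix (Fin n) (Fin n) (ExteriorAlgebra R (Fin NN → R)))
    (hp : ∀ i j, p i j ∈ evenPart R (Fin NN → R))
    (hs : ∀ i j, s i j ∈ evenPart R (Fin NN → R))
    (hq : ∀ i j, q i j ∈ oddPart R (Fin NN → R))
    (hr : ∀ i j, r i j ∈ oddPart R (Fin NN → R)) :
    IsUnit (Matrix.fromBlocks p q r s) ↔ IsUnit p ∧ IsUnit s := by
  have hodd : oddPart R (Fin NN → R) ≤ auxK R NN := by
    refine iSup_le fun i => ?_
    exact le_iSup (fun k => LinearMap.range (ExteriorAlgebra.ι R (M := Fin NN → R)) ^ (k + 1))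
      (2 * i)
  have hqz : q.map (ExteriorAlgebra.algebraMapInv (M := Fin NN → R)) = 0 := by
    ext i j
    exact auxK_eps R NN (hodd (hq i j))
  have hrz : r.map (ExteriorAlgebra.algebraMapInv (M := Fin NN → R)) = 0 := by
    ext i j
    exact auxK_eps R NN (hodd (hr i j))
  rw [aux_matrix_isUnit_iff R NN, Matrix.fromBlocks_map, hqz, hrz,
    aux_blocks_isUnit_iff, ← aux_matrix_isUnit_iff R NN, ← aux_matrix_isUnit_iff R NN]
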